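/- There exists an absolute constant C such that for every γ > 0, T > 0 and every u ∈ C¹([0,T]; ℝⁿ), and every t ∈ [0,T]: e^{-γt}|u(t)| + (γ ∫₀ᵗ e^{-2γt'}|u(t')|² dt')^{1/2} ≤ C ( |u(0)| + S*_{γ,t}(|∂ₜu|) ), where S*_{γ,t}(f) = sup over φ ∈ L^∞ ∩ L² of |∫₀ᵗ e^{-2γt'} f(t') φ(t') dt'| subject to sup_{t'∈[0,t]} e^{-γt'}|φ(t')| + (γ ∫₀ᵗ e^{-2γt'}|φ(t')|² dt')^{1/2} ≤ 1. -/

import Mathlib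

open MeasureTheory Set intervalIntegral
open scoped RealInnerProductSpace

/-- The dual norm `S*_{γ,t}(f)`: the supremum of the weighted pairings
`|∫₀ᵗ e^{-2γs} f(s) φ(s) ds|` over measurable `φ` with
`sup_{[0,t]} e^{-γs}|φ(s)| + (γ ∫₀ᵗ e^{-2γs} φ(s)² ds)^{1/2} ≤ 1`. -/
noncomputable def Sstar (γ t : ℝ) (f : ℝ → ℝ) : ℝ :=
  sSup { y : ℝ | ∃ φ : ℝ → ℝ, Measurable φ ∧
    (∃ a : ℝ, (∀ s ∈ Set.Icc (0:ℝ) t, Real.exp (-(γ * s)) * |φ s| ≤ a) ∧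
      a + Real.sqrt (γ * ∫ s in (0:ℝ)..t, Real.exp (-(2 * γ * s)) * φ s ^ 2) ≤ 1) ∧
    y = |∫ s in (0:ℝ)..t, Real.exp (-(2 * γ * s)) * f s * φ s| }

set_option maxHeartbeats 1000000 in
/-- There is an absolute constant `C` such that for every `γ, T > 0` and every
`u ∈ C¹([0,T]; ℝⁿ)` with derivative `u'`, and every `t ∈ [0,T]`:
`e^{-γt}|u(t)| + (γ ∫₀ᵗ e^{-2γs}|u(s)|² ds)^{1/2} ≤ C (|u(0)| + S*_{γ,t}(|∂ₜu|))`. -/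
theorem stmt4 :
    ∃ C : ℝ, 0 < C ∧ ∀ (n : ℕ) (γ T : ℝ), 0 < γ → 0 < T →
      ∀ u u' : ℝ → EuclideanSpace ℝ (Fin n),
        (∀ s ∈ Set.Icc (0:ℝ) T, HasDerivWithinAt u (u' s) (Set.Icc (0:ℝ) T) s) →
        ContinuousOn u' (Set.Icc (0:ℝ) T) →
        ∀ t ∈ Set.Icc (0:ℝ) T,
          Real.exp (-(γ * t)) * ‖u t‖ +
              Real.sqrt (γ * ∫ s in (0:ℝ)..t, Real.exp (-(2 * γ * s)) * ‖u s‖ ^ 2) ≤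
            C * (‖u 0‖ + Sstar γ t fun s => ‖u' s‖) := by
  refine ⟨16, by norm_num, ?_⟩
  intro n γ T hγ hT u u' hu hc' t ht
  obtain ⟨ht0, htT⟩ := ht
  have hsubT : Icc (0:ℝ) t ⊆ Icc (0:ℝ) T := Icc_subset_Icc le_rfl htT
  have huIcc : uIcc (0:ℝ) t = Icc (0:ℝ) t := uIcc_of_le ht0
  have hcu : ContinuousOn u (Icc (0:ℝ) T) := fun s hs => (hu s hs).continuousWithinAt
  have hcut : ContinuousOn u (Icc (0:ℝ) t) := hcu.mono hsubT
  have hcu't : ContinuousOn u' (Icc (0:ℝ) t) := hc'.mono hsubT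
  have hcexp : Continuous fun r : ℝ => Real.exp (-(2 * γ * r)) := by fun_prop
  set S := Sstar γ t (fun s => ‖u' s‖) with hSdef
  obtain ⟨M, hM⟩ := isCompact_Icc.exists_bound_of_continuousOn hcu't
  -- boundedness of the defining set of `S`
  have hbdd : BddAbove { y : ℝ | ∃ φ : ℝ → ℝ, Measurable φ ∧
      (∃ a : ℝ, (∀ s ∈ Set.Icc (0:ℝ) t, Real.exp (-(γ * s)) * |φ s| ≤ a) ∧
        a + Real.sqrt (γ * ∫ s in (0:ℝ)..t, Real.exp (-(2 * γ * s)) * φ s ^ 2) ≤ 1) ∧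
      y = |∫ s in (0:ℝ)..t, Real.exp (-(2 * γ * s)) * ‖u' s‖ * φ s| } := by
    refine ⟨(|M| + 1) * Real.exp (γ * t) * |t - 0|, ?_⟩
    rintro y ⟨φ, hφm, ⟨a, haφ, ha1⟩, rfl⟩
    have ha : a ≤ 1 := le_trans (le_add_of_nonneg_right (Real.sqrt_nonneg _)) ha1
    have := intervalIntegral.norm_integral_le_of_norm_le_const
      (C := (|M| + 1) * Real.exp (γ * t))
      (f := fun s => Real.exp (-(2 * γ * s)) * ‖u' s‖ * φ s) (a := (0:ℝ)) (b := t) ?_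
    · simpa [Real.norm_eq_abs] using this
    · intro x hx
      rw [Set.uIoc_of_le ht0] at hx
      have hx' : x ∈ Icc (0:ℝ) t := ⟨hx.1.le, hx.2⟩
      have hmul : Real.exp (γ * x) * Real.exp (-(γ * x)) = 1 := by
        rw [← Real.exp_add, add_neg_cancel, Real.exp_zero]
      have h2 : Real.exp (-(γ * x)) * |φ x| ≤ 1 := (haφ x hx').trans ha
      have hp : |φ x| ≤ Real.exp (γ * t) := by
        have hE : Real.exp (γ * x) ≤ Real.exp (γ * t) :=
          Real.exp_le_exp.2 (by nlinarith [hx'.2, hγ.le])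
        nlinarith [Real.exp_pos (γ * x), abs_nonneg (φ x)]
      have he : Real.exp (-(2 * γ * x)) ≤ 1 := Real.exp_le_one_iff.2 (by nlinarith [hx'.1])
      have hn : ‖u' x‖ ≤ |M| + 1 := by
        have := hM x hx'
        have := le_abs_self M
        linarith
      rw [Real.norm_eq_abs, abs_mul, abs_mul,
        abs_of_nonneg (Real.exp_pos _).le, abs_of_nonneg (norm_nonneg _)]
      have hcomb : Real.exp (-(2*γ*x)) * ‖u' x‖ * |φ x| ≤ (1 * (|M|+1)) * Real.exp (γ*t) :=
        mul_le_mul (mul_le_mul he hn (norm_nonneg _) zero_le_one) hp (abs_nonneg _) (by positivity)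
      linarith
  have hSsup : S = sSup { y : ℝ | ∃ φ : ℝ → ℝ, Measurable φ ∧
      (∃ a : ℝ, (∀ s ∈ Set.Icc (0:ℝ) t, Real.exp (-(γ * s)) * |φ s| ≤ a) ∧
        a + Real.sqrt (γ * ∫ s in (0:ℝ)..t, Real.exp (-(2 * γ * s)) * φ s ^ 2) ≤ 1) ∧
      y = |∫ s in (0:ℝ)..t, Real.exp (-(2 * γ * s)) * ‖u' s‖ * φ s| } := rfl
  have hS0 : 0 ≤ S := by
    rw [hSsup]
    refine le_csSup hbdd ⟨0, measurable_const, ⟨0, fun s _ => by simp, by simp⟩, by simp⟩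
  -- the maximum point of `e^{-γ s} ‖u s‖`
  obtain ⟨s₀, hs₀mem, hs₀max⟩ := isCompact_Icc.exists_isMaxOn (nonempty_Icc.2 ht0)
    (((by fun_prop : Continuous fun s : ℝ => Real.exp (-(γ * s))).continuousOn).mul hcut.norm)
  have hA : ∀ s ∈ Icc (0:ℝ) t, Real.exp (-(γ * s)) * ‖u s‖ ≤ Real.exp (-(γ * s₀)) * ‖u s₀‖ :=
    fun s hs => hs₀max hs
  set A := Real.exp (-(γ * s₀)) * ‖u s₀‖ with hAdef
  have hA0 : 0 ≤ A := by positivity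
  have hnn : 0 ≤ γ * ∫ s in (0:ℝ)..t, Real.exp (-(2 * γ * s)) * ‖u s‖ ^ 2 :=
    mul_nonneg hγ.le (intervalIntegral.integral_nonneg ht0 fun s _ => by positivity)
  set B := Real.sqrt (γ * ∫ s in (0:ℝ)..t, Real.exp (-(2 * γ * s)) * ‖u s‖ ^ 2) with hBdef
  have hB0 : 0 ≤ B := Real.sqrt_nonneg _
  have hBsq : B ^ 2 = γ * ∫ s in (0:ℝ)..t, Real.exp (-(2 * γ * s)) * ‖u s‖ ^ 2 :=
    Real.sq_sqrt hnn
  set K := ∫ s in (0:ℝ)..t, Real.exp (-(2 * γ * s)) * (‖u' s‖ * ‖u s‖) with hKdef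
  -- integrability facts
  have hInt2 : IntervalIntegrable (fun s => Real.exp (-(2 * γ * s)) * ‖u s‖ ^ 2) volume 0 t := by
    apply ContinuousOn.intervalIntegrable
    rw [huIcc]; exact hcexp.continuousOn.mul (hcut.norm.pow 2)
  have hIntK : IntervalIntegrable (fun s => Real.exp (-(2 * γ * s)) * (‖u' s‖ * ‖u s‖)) volume 0 t := by
    apply ContinuousOn.intervalIntegrable
    rw [huIcc]; exact hcexp.continuousOn.mul (hcu't.norm.mul hcut.norm)
  -- the energy inequality
  have key : ∀ s ∈ Icc (0:ℝ) t,
      Real.exp (-(2 * γ * s)) * ‖u s‖ ^ 2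
        + 2 * γ * (∫ r in (0:ℝ)..s, Real.exp (-(2 * γ * r)) * ‖u r‖ ^ 2)
      ≤ ‖u 0‖ ^ 2 + 2 * K := by
    rintro s ⟨hs0, hst⟩
    have hsub : Icc (0:ℝ) s ⊆ Icc (0:ℝ) t := Icc_subset_Icc le_rfl hst
    have huIccs : uIcc (0:ℝ) s = Icc (0:ℝ) s := uIcc_of_le hs0
    set G : ℝ → ℝ := fun r =>
      Real.exp (-(2 * γ * r)) * (⟪u r, u' r⟫ + ⟪u' r, u r⟫)
        - 2 * γ * (Real.exp (-(2 * γ * r)) * ‖u r‖ ^ 2) with hGdef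
    have hFc : ContinuousOn (fun r => Real.exp (-(2 * γ * r)) * ‖u r‖ ^ 2) (Icc 0 s) :=
      (hcexp.continuousOn.mul (hcut.norm.pow 2)).mono hsub
    have hg1c : ContinuousOn (fun r => Real.exp (-(2 * γ * r)) * (⟪u r, u' r⟫ + ⟪u' r, u r⟫))
        (Icc (0:ℝ) s) :=
      (hcexp.continuousOn.mul ((hcut.inner hcu't).add (hcu't.inner hcut))).mono hsub
    have hg1int : IntervalIntegrable
        (fun r => Real.exp (-(2 * γ * r)) * (⟪u r, u' r⟫ + ⟪u' r, u r⟫)) volume 0 s := by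
      apply ContinuousOn.intervalIntegrable; rw [huIccs]; exact hg1c
    have hg2int : IntervalIntegrable
        (fun r => 2 * γ * (Real.exp (-(2 * γ * r)) * ‖u r‖ ^ 2)) volume 0 s :=
      ((hInt2.mono_set (by rw [huIcc, huIccs]; exact hsub)).const_mul (2 * γ))
    have hGint : IntervalIntegrable G volume 0 s := hg1int.sub hg2int
    have hderiv : ∀ r ∈ Ioo (0:ℝ) s,
        HasDerivWithinAt (fun x => Real.exp (-(2 * γ * x)) * ‖u x‖ ^ 2) (G r) (Set.Ioi r) r := by
      intro r hr
      have hrT : r ∈ Icc (0:ℝ) T := ⟨hr.1.le, (hr.2.trans_le (hst.trans htT)).le⟩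
      have hd : HasDerivAt u (u' r) r :=
        (hu r hrT).hasDerivAt (Icc_mem_nhds hr.1 (hr.2.trans_le (hst.trans htT)))
      have hl : HasDerivAt (fun x : ℝ => -(2 * γ * x)) (-(2 * γ)) r := by
        have := (hasDerivAt_id r).const_mul (-(2 * γ))
        simpa [mul_assoc, neg_mul] using this
      have h4 := (hl.exp).mul (hd.inner ℝ hd)
      have hfe : (fun x => Real.exp (-(2 * γ * x)) * ‖u x‖ ^ 2)
          = fun x => Real.exp (-(2 * γ * x)) * ⟪u x, u x⟫ := by
        funext x; rw [real_inner_self_eq_norm_sq]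
      rw [hfe]
      have hge : G r = Real.exp (-(2 * γ * r)) * (-(2 * γ)) * ⟪u r, u r⟫
          + Real.exp (-(2 * γ * r)) * (⟪u r, u' r⟫ + ⟪u' r, u r⟫) := by
        rw [hGdef]; simp only []
        rw [real_inner_self_eq_norm_sq]; ring
      rw [hge]
      exact h4.hasDerivWithinAt
    have hFTC := intervalIntegral.integral_eq_sub_of_hasDeriv_right_of_le hs0 hFc hderiv hGint
    have hsplit : (∫ r in (0:ℝ)..s, G r)
        = (∫ r in (0:ℝ)..s, Real.exp (-(2 * γ * r)) * (⟪u r, u' r⟫ + ⟪u' r, u r⟫))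
          - 2 * γ * ∫ r in (0:ℝ)..s, Real.exp (-(2 * γ * r)) * ‖u r‖ ^ 2 := by
      rw [hGdef]
      rw [intervalIntegral.integral_sub hg1int hg2int, intervalIntegral.integral_const_mul]
    have hF0 : Real.exp (-(2 * γ * 0)) * ‖u 0‖ ^ 2 = ‖u 0‖ ^ 2 := by norm_num
    -- bound the inner-product integral by 2K
    have hmono1 : (∫ r in (0:ℝ)..s, Real.exp (-(2 * γ * r)) * (⟪u r, u' r⟫ + ⟪u' r, u r⟫))
        ≤ ∫ r in (0:ℝ)..s, 2 * (Real.exp (-(2 * γ * r)) * (‖u' r‖ * ‖u r‖)) := by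
      apply intervalIntegral.integral_mono_on hs0 hg1int
        (((hIntK.mono_set (by rw [huIcc, huIccs]; exact hsub))).const_mul 2)
      intro x hx
      have h1 := real_inner_le_norm (u x) (u' x)
      have h2 := real_inner_le_norm (u' x) (u x)
      have he := (Real.exp_pos (-(2 * γ * x))).le
      nlinarith [norm_nonneg (u x), norm_nonneg (u' x)]
    have hmono2 : (∫ r in (0:ℝ)..s, 2 * (Real.exp (-(2 * γ * r)) * (‖u' r‖ * ‖u r‖)))
        ≤ 2 * K := by
      rw [intervalIntegral.integral_const_mul, hKdef]
      have := intervalIntegral.integral_mono_interval (μ := volume) le_rfl hs0 hst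
        (Filter.Eventually.of_forall
          (fun x => by positivity : ∀ x : ℝ, 0 ≤ Real.exp (-(2 * γ * x)) * (‖u' x‖ * ‖u x‖)))
        hIntK
      linarith
    have hF0' := hFTC
    rw [hsplit, hF0] at hF0'
    linarith
  -- A² and B² bounds
  have hA2 : A ^ 2 ≤ ‖u 0‖ ^ 2 + 2 * K := by
    have h := key s₀ hs₀mem
    have h2 : 0 ≤ ∫ r in (0:ℝ)..s₀, Real.exp (-(2 * γ * r)) * ‖u r‖ ^ 2 :=
      intervalIntegral.integral_nonneg hs₀mem.1 fun r _ => by positivity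
    have hAe : A ^ 2 = Real.exp (-(2 * γ * s₀)) * ‖u s₀‖ ^ 2 := by
      rw [hAdef, mul_pow, sq (Real.exp _), ← Real.exp_add]
      congr 2; ring
    nlinarith [hγ]
  have hB2 : 2 * B ^ 2 ≤ ‖u 0‖ ^ 2 + 2 * K := by
    have h := key t ⟨ht0, le_rfl⟩
    have h0 : 0 ≤ Real.exp (-(2 * γ * t)) * ‖u t‖ ^ 2 := by positivity
    rw [hBsq]; linarith
  have hut : Real.exp (-(γ * t)) * ‖u t‖ ≤ A := hA t ⟨ht0, le_rfl⟩
  rcases eq_or_lt_of_le (add_nonneg hA0 hB0) with hD | hD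
  · have h0 : 0 ≤ Real.exp (-(γ * t)) * ‖u t‖ := by positivity
    nlinarith [norm_nonneg (u 0)]
  · -- the test function φ₀
    have hKS : K ≤ (A + B) * S := by
      set φ₀ : ℝ → ℝ := fun r => ‖u (max 0 (min r t))‖ / (A + B) with hφ₀
      have hclamp : ∀ r : ℝ, max 0 (min r t) ∈ Icc (0:ℝ) t :=
        fun r => ⟨le_max_left _ _, max_le ht0 (min_le_right _ _)⟩
      have hcl : Continuous fun r : ℝ => max 0 (min r t) :=
        continuous_const.max (continuous_id.min continuous_const)
      have hφc : Continuous φ₀ := ((hcut.comp_continuous hcl hclamp).norm).div_const _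
      have hφm : Measurable φ₀ := hφc.measurable
      have hφeq : ∀ r ∈ Icc (0:ℝ) t, φ₀ r = ‖u r‖ / (A + B) := by
        intro r hr
        simp only [hφ₀]
        rw [min_eq_left hr.2, max_eq_right hr.1]
      have hmem : |∫ r in (0:ℝ)..t, Real.exp (-(2 * γ * r)) * ‖u' r‖ * φ₀ r| ∈
          { y : ℝ | ∃ φ : ℝ → ℝ, Measurable φ ∧
            (∃ a : ℝ, (∀ s ∈ Set.Icc (0:ℝ) t, Real.exp (-(γ * s)) * |φ s| ≤ a) ∧
              a + Real.sqrt (γ * ∫ s in (0:ℝ)..t, Real.exp (-(2 * γ * s)) * φ s ^ 2) ≤ 1) ∧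
            y = |∫ s in (0:ℝ)..t, Real.exp (-(2 * γ * s)) * ‖u' s‖ * φ s| } := by
        refine ⟨φ₀, hφm, ⟨A / (A + B), ?_, ?_⟩, rfl⟩
        · intro r hr
          rw [hφeq r hr, abs_of_nonneg (by positivity), ← mul_div_assoc]
          exact div_le_div_of_nonneg_right (hA r hr) hD.le
        · have hIeq : (∫ r in (0:ℝ)..t, Real.exp (-(2 * γ * r)) * φ₀ r ^ 2)
              = (∫ r in (0:ℝ)..t, Real.exp (-(2 * γ * r)) * ‖u r‖ ^ 2) / (A + B) ^ 2 := by
            rw [← intervalIntegral.integral_div]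
            apply intervalIntegral.integral_congr
            intro r hr
            rw [huIcc] at hr
            simp only [hφeq r hr, div_pow, mul_div_assoc]
          rw [hIeq, ← mul_div_assoc, Real.sqrt_div hnn, Real.sqrt_sq hD.le,
            ← add_div, div_self hD.ne']
      have hy : |∫ r in (0:ℝ)..t, Real.exp (-(2 * γ * r)) * ‖u' r‖ * φ₀ r| ≤ S := by
        rw [hSsup]
        exact le_csSup hbdd hmem
      have hKeq : (∫ r in (0:ℝ)..t, Real.exp (-(2 * γ * r)) * ‖u' r‖ * φ₀ r) = K / (A + B) := by
        rw [hKdef, ← intervalIntegral.integral_div]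
        apply intervalIntegral.integral_congr
        intro r hr
        rw [huIcc] at hr
        simp only [hφeq r hr]
        ring
      have hfin : K / (A + B) ≤ S := by
        rw [← hKeq]
        exact le_trans (le_abs_self _) hy
      rw [div_le_iff₀ hD] at hfin
      linarith
    clear_value S A B K
    nlinarith [sq_nonneg (A - B), sq_nonneg (A + B - 16 * S), sq_nonneg (A + B - 4 * ‖u 0‖),
      mul_nonneg (norm_nonneg (u 0)) hS0, mul_nonneg (add_nonneg hA0 hB0) hS0,
      norm_nonneg (u 0)]
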